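/- arXiv:1008.1810 — 3 statements merged into one kernel-verified Lean document; each statement's English description precedes it below -/
import Mathlib

section
/- For the domain wall solution f(x) = b·tanh(√(-λ) b x) with λ < 0, the stress-energy components are T_{tt} = λ b^4 tanh^2(√(-λ)bx) sech^2(√(-λ)bx), T_{xx} = 0, and T_{yy} = T_{zz} = λ b^4 sech^4(√(-λ)bx), and the integrals σ = ∫_{-∞}^{∞} T_{tt} dx = -(2/3)√(-λ) b^3 and τ = -∫_{-∞}^{∞} T_{yy} dx = (4/3)√(-λ) b^3 hold; in particular σ - 2τ < 0. -/
open MeasureTheory Real Filter Set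

private lemma tanh_eq_exp (x : ℝ) :
    Real.tanh x = (1 - Real.exp (-(2 * x))) / (1 + Real.exp (-(2 * x))) := by
  rw [Real.tanh_eq_sinh_div_cosh, Real.sinh_eq, Real.cosh_eq]
  have h1 : Real.exp (-x) = (Real.exp x)⁻¹ := Real.exp_neg x
  have h2 : Real.exp (-(2 * x)) = ((Real.exp x) ^ 2)⁻¹ := by
    rw [Real.exp_neg, two_mul, Real.exp_add]; ring
  have he : Real.exp x ≠ 0 := Real.exp_ne_zero x
  have hd : Real.exp x + (Real.exp x)⁻¹ ≠ 0 := by positivity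
  have hd2 : 1 + ((Real.exp x) ^ 2)⁻¹ ≠ 0 := by positivity
  rw [h1, h2]
  field_simp

private lemma tendsto_tanh_atTop : Tendsto Real.tanh atTop (nhds 1) := by
  have h : Tendsto (fun x : ℝ => Real.exp (-(2 * x))) atTop (nhds 0) := by
    apply Real.tendsto_exp_atBot.comp
    have h2x : Tendsto (fun x : ℝ => 2 * x) atTop atTop :=
      tendsto_atTop_atTop_of_monotone (fun a b hab => by linarith) (fun c => ⟨c/2+1, by linarith⟩)
    exact tendsto_neg_atBot_iff.mpr h2x |>.congr (fun x => rfl)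
  have : Tendsto (fun x : ℝ => (1 - Real.exp (-(2 * x))) / (1 + Real.exp (-(2 * x))))
      atTop (nhds ((1 - 0) / (1 + 0))) :=
    Tendsto.div ((tendsto_const_nhds).sub h) ((tendsto_const_nhds).add h) (by norm_num)
  norm_num at this
  exact this.congr (fun x => (tanh_eq_exp x).symm)

private lemma hasDerivAt_tanh (x : ℝ) :
    HasDerivAt Real.tanh ((1 / Real.cosh x) ^ 2) x := by
  have h := ((Real.hasDerivAt_sinh x).div (Real.hasDerivAt_cosh x) ((Real.cosh_pos x).ne'))
  have hval : (Real.cosh x * Real.cosh x - Real.sinh x * Real.sinh x) / Real.cosh x ^ 2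
      = (1 / Real.cosh x) ^ 2 := by
    have := Real.cosh_sq_sub_sinh_sq x
    field_simp
    nlinarith [this]
  rw [hval] at h
  exact h.congr_of_eventuallyEq (Filter.Eventually.of_forall fun y =>
    (Real.tanh_eq_sinh_div_cosh y))

private lemma one_sub_tanh_sq (x : ℝ) :
    1 - Real.tanh x ^ 2 = (1 / Real.cosh x) ^ 2 := by
  have h := Real.cosh_sq_sub_sinh_sq x
  have hc := (Real.cosh_pos x).ne'
  rw [Real.tanh_eq_sinh_div_cosh]
  field_simp
  exact h


private lemma even_fun_integral (g : ℝ → ℝ) (hg : ∀ x, g (-x) = g x) :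
    ∫ x : ℝ, g x = 2 * ∫ x in Ioi (0:ℝ), g x := by
  rw [← integral_comp_abs (f := g)]
  congr 1
  ext x
  rcases le_or_gt 0 x with h | h
  · rw [abs_of_nonneg h]
  · rw [abs_of_neg h, hg]

private lemma int_Ioi_tanh_sq_sech_sq :
    ∫ x in Ioi (0:ℝ), Real.tanh x ^ 2 * (1 / Real.cosh x) ^ 2 = 1/3 := by
  have hderiv : ∀ x ∈ Ici (0:ℝ), HasDerivAt (fun y => Real.tanh y ^ 3 / 3)
      (Real.tanh x ^ 2 * (1 / Real.cosh x) ^ 2) x := by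
    intro x _
    have h := ((hasDerivAt_tanh x).pow 3).div_const 3
    refine h.congr_deriv ?_
    ring
  have hpos : ∀ x ∈ Ioi (0:ℝ), 0 ≤ Real.tanh x ^ 2 * (1 / Real.cosh x) ^ 2 := by
    intro x _; positivity
  have htend : Tendsto (fun y => Real.tanh y ^ 3 / 3) atTop (nhds (1/3)) := by
    have := (tendsto_tanh_atTop.pow 3).div_const 3
    simpa using this
  have := integral_Ioi_of_hasDerivAt_of_nonneg' hderiv hpos htend
  simpa [Real.tanh_zero] using this

private lemma int_Ioi_sech4 :
    ∫ x in Ioi (0:ℝ), (1 / Real.cosh x) ^ 4 = 2/3 := by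
  have hderiv : ∀ x ∈ Ici (0:ℝ), HasDerivAt (fun y => Real.tanh y - Real.tanh y ^ 3 / 3)
      ((1 / Real.cosh x) ^ 4) x := by
    intro x _
    have h := (hasDerivAt_tanh x).sub (((hasDerivAt_tanh x).pow 3).div_const 3)
    refine h.congr_deriv ?_
    have h1 := one_sub_tanh_sq x
    have : (1 / Real.cosh x) ^ 4 = (1 - Real.tanh x ^ 2) * (1 / Real.cosh x) ^ 2 := by
      rw [h1]; ring
    rw [this]; ring
  have hpos : ∀ x ∈ Ioi (0:ℝ), 0 ≤ (1 / Real.cosh x) ^ 4 := by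
    intro x _; positivity
  have htend : Tendsto (fun y => Real.tanh y - Real.tanh y ^ 3 / 3) atTop (nhds (2/3)) := by
    have := tendsto_tanh_atTop.sub ((tendsto_tanh_atTop.pow 3).div_const 3)
    convert this using 2
    norm_num
  have := integral_Ioi_of_hasDerivAt_of_nonneg' hderiv hpos htend
  simpa [Real.tanh_zero] using this

private lemma int_tanh_sq_sech_sq :
    ∫ x : ℝ, Real.tanh x ^ 2 * (1 / Real.cosh x) ^ 2 = 2/3 := by
  rw [even_fun_integral _ (fun x => by simp [Real.tanh_neg, Real.cosh_neg]),
    int_Ioi_tanh_sq_sech_sq]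
  norm_num

private lemma int_sech4 : ∫ x : ℝ, (1 / Real.cosh x) ^ 4 = 4/3 := by
  rw [even_fun_integral _ (fun x => by simp [Real.cosh_neg]), int_Ioi_sech4]
  norm_num

/-- For the domain wall `f(x) = b·tanh(√(-λ)bx)` with `λ < 0`, `b > 0`,
the stress-energy components are
`T_tt = λb⁴ tanh²(√(-λ)bx) sech²(√(-λ)bx)`, `T_xx = 0`,
`T_yy = T_zz = λb⁴ sech⁴(√(-λ)bx)`, and the surface density and tension are
`σ = ∫ T_tt = -(2/3)√(-λ)b³` and `τ = -∫ T_yy = (4/3)√(-λ)b³`; in particular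
`σ - 2τ < 0`. -/
theorem stmt_10 (lam b : ℝ) (hlam : lam < 0) (hb : 0 < b) :
    let k : ℝ := Real.sqrt (-lam) * b
    let Ttt : ℝ → ℝ := fun x =>
      lam * b ^ 4 * (Real.tanh (k * x)) ^ 2 * (1 / Real.cosh (k * x)) ^ 2
    let Txx : ℝ → ℝ := fun _ => 0
    let Tyy : ℝ → ℝ := fun x => lam * b ^ 4 * (1 / Real.cosh (k * x)) ^ 4
    let Tzz : ℝ → ℝ := Tyy
    let σ : ℝ := ∫ x : ℝ, Ttt x
    let τ : ℝ := -∫ x : ℝ, Tyy x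
    (∀ x, Txx x = 0) ∧ (∀ x, Tzz x = Tyy x) ∧
    σ = -(2 / 3) * Real.sqrt (-lam) * b ^ 3 ∧
    τ = (4 / 3) * Real.sqrt (-lam) * b ^ 3 ∧
    σ - 2 * τ < 0 := by
  intro k Ttt Txx Tyy Tzz σ τ
  have hs : 0 < Real.sqrt (-lam) := Real.sqrt_pos.mpr (by linarith)
  have hk : 0 < k := mul_pos hs hb
  have hsq : Real.sqrt (-lam) ^ 2 = -lam := Real.sq_sqrt (by linarith)
  have hσ : σ = lam * b ^ 4 * k⁻¹ * (2/3) := by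
    show (∫ x : ℝ, Ttt x) = _
    have : ∀ x, Ttt x = lam * b ^ 4 *
        ((fun y => Real.tanh y ^ 2 * (1 / Real.cosh y) ^ 2) (k * x)) := by
      intro x; simp only [Ttt]; ring
    simp_rw [this, MeasureTheory.integral_const_mul,
      Measure.integral_comp_mul_left (fun y => Real.tanh y ^ 2 * (1 / Real.cosh y) ^ 2) k,
      int_tanh_sq_sech_sq, abs_of_pos (inv_pos.mpr hk), smul_eq_mul]
    ring
  have hτ : τ = -(lam * b ^ 4 * k⁻¹ * (4/3)) := by
    show -(∫ x : ℝ, Tyy x) = _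
    have : ∀ x, Tyy x = lam * b ^ 4 *
        ((fun y => (1 / Real.cosh y) ^ 4) (k * x)) := fun x => rfl
    simp_rw [this, MeasureTheory.integral_const_mul,
      Measure.integral_comp_mul_left (fun y => (1 / Real.cosh y) ^ 4) k,
      int_sech4, abs_of_pos (inv_pos.mpr hk), smul_eq_mul]
    ring
  have hkey : lam * b ^ 4 * k⁻¹ = -(Real.sqrt (-lam) * b ^ 3) := by
    have hk' : k ≠ 0 := ne_of_gt hk
    field_simp [k]
    linear_combination b * hsq
  refine ⟨fun x => rfl, fun x => rfl, ?_, ?_, ?_⟩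
  · rw [hσ, hkey]; ring
  · rw [hτ, hkey]; ring
  · rw [hσ, hτ, hkey]
    nlinarith [mul_pos hs (pow_pos hb 3)]
end

section
/- For 0 < ε < 1, the functions M^2(r̃) = (r̃^{1+ε} + C_1)/r̃^{1-ε} and N^2(r̃) = (1+ε) r̃^{1+ε}/(r̃^{1+ε} + C_1) solve the BPS-limit Einstein equations (2/r̃)(N'/N) + (N^2 - 1)/r̃^2 = ε/r̃^2 and (2/r̃)(M'/M) - (N^2 - 1)/r̃^2 = ε/r̃^2 on (0,∞) wherever r̃^{1+ε} + C_1 > 0. -/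
/-- For `0 < ε < 1`, `M²(r) = (r^{1+ε} + C₁)/r^{1-ε}` and
`N²(r) = (1+ε) r^{1+ε}/(r^{1+ε} + C₁)` solve the BPS-limit Einstein equations
`(2/r)(N'/N) + (N² - 1)/r² = ε/r²` and `(2/r)(M'/M) - (N² - 1)/r² = ε/r²`
on `(0,∞)` wherever `r^{1+ε} + C₁ > 0`.  (With `m = M²`, `n = N²` one has
`2 M'/M = m'/m` and `2 N'/N = n'/n`.) -/
theorem stmt_13 (ε C₁ : ℝ) (hε0 : 0 < ε) (hε1 : ε < 1) :
    let m : ℝ → ℝ := fun r => (r ^ (1 + ε) + C₁) / r ^ (1 - ε)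
    let n : ℝ → ℝ := fun r => (1 + ε) * r ^ (1 + ε) / (r ^ (1 + ε) + C₁)
    ∀ r : ℝ, 0 < r → 0 < r ^ (1 + ε) + C₁ →
      (1 / r) * (deriv n r / n r) + (n r - 1) / r ^ 2 = ε / r ^ 2 ∧
      (1 / r) * (deriv m r / m r) - (n r - 1) / r ^ 2 = ε / r ^ 2 := by
  intro m n r hr hden
  have hr0 : r ≠ 0 := ne_of_gt hr
  have ha : (0:ℝ) < r ^ ε := Real.rpow_pos_of_pos hr ε
  have ha0 : r ^ ε ≠ 0 := ne_of_gt ha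
  have h1 : r ^ (1+ε) = r * r ^ ε := by rw [Real.rpow_add hr, Real.rpow_one]
  have h2 : r ^ (1-ε) = r / r ^ ε := by rw [Real.rpow_sub hr, Real.rpow_one]
  have hneg : r ^ (-ε) = (r ^ ε)⁻¹ := Real.rpow_neg hr.le ε
  have hA : HasDerivAt (fun x : ℝ => x ^ (1+ε)) ((1+ε) * r ^ ε) r := by
    simpa [show (1:ℝ)+ε-1 = ε from by ring] using
      Real.hasDerivAt_rpow_const (p := 1+ε) (Or.inl hr0)
  have hB : HasDerivAt (fun x : ℝ => x ^ (1-ε)) ((1-ε) / r ^ ε) r := by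
    have := Real.hasDerivAt_rpow_const (p := 1-ε) (x := r) (Or.inl hr0)
    rw [show (1:ℝ)-ε-1 = -ε from by ring, hneg] at this
    simpa [div_eq_mul_inv] using this
  have hb2 : r ^ (1-ε) ≠ 0 := ne_of_gt (Real.rpow_pos_of_pos hr _)
  have hdne : r ^ (1+ε) + C₁ ≠ 0 := ne_of_gt hden
  have hdne' : r * r ^ ε + C₁ ≠ 0 := by rwa [← h1]
  -- derivative of m
  have hm : HasDerivAt m
      (((1+ε) * r ^ ε * (r / r ^ ε) - (r * r ^ ε + C₁) * ((1-ε) / r ^ ε)) / (r / r ^ ε) ^ 2) r := by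
    have := (hA.add_const C₁).div hB hb2
    rw [h1, h2] at this
    exact this
  -- derivative of n
  have hn : HasDerivAt n
      (((1+ε) * ((1+ε) * r ^ ε) * (r * r ^ ε + C₁) - (1+ε) * (r * r ^ ε) * ((1+ε) * r ^ ε))
        / (r * r ^ ε + C₁) ^ 2) r := by
    have := (hA.const_mul (1+ε)).div (hA.add_const C₁) hdne
    rw [h1] at this
    exact this
  have hmr : m r = (r * r ^ ε + C₁) / (r / r ^ ε) := by simp only [m, h1, h2]
  have hnr : n r = (1+ε) * (r * r ^ ε) / (r * r ^ ε + C₁) := by simp only [n, h1]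
  have hε1' : (0:ℝ) < 1 + ε := by linarith
  have hmr0 : m r ≠ 0 := by
    rw [hmr]
    positivity
  have hnr0 : n r ≠ 0 := by
    rw [hnr]
    positivity
  constructor
  · rw [hn.deriv, hnr]
    field_simp
    ring
  · rw [hm.deriv, hmr, hnr]
    field_simp
    ring
end

section
/- The deflection integral for null geodesics in the metric with M^2 = r^{2ε}, N^2 = 1+ε evaluates to Δφ = 2∫_{r_m}^∞ √(1+ε) dr / (r^2 √(β^{-2} r^{-2ε} - r^{-2})) = π √(1+ε)/(1-ε), where r_m is the positive root of β^{-2} r^{-2ε} = r^{-2}; in particular Δφ is independent of β for ε ∈ (0,1). -/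
open MeasureTheory

/-- The deflection integral for null geodesics in the metric with
`M² = r^{2ε}`, `N² = 1+ε` evaluates to
`Δφ = 2∫_{r_m}^∞ √(1+ε) dr/(r²√(β⁻²r^{-2ε} - r^{-2})) = π√(1+ε)/(1-ε)`,
where `r_m > 0` is the root of `β⁻² r^{-2ε} = r^{-2}`; in particular `Δφ` is
independent of `β`. -/
theorem stmt_14 (ε β rm : ℝ) (hε0 : 0 < ε) (hε1 : ε < 1) (hβ : 0 < β) (hrm : 0 < rm)
    (hroot : β⁻¹ ^ 2 * rm ^ (-(2 : ℝ) * ε) = rm ^ (-(2 : ℝ))) :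
    2 * ∫ r in Set.Ioi rm,
        Real.sqrt (1 + ε) /
          (r ^ 2 * Real.sqrt (β⁻¹ ^ 2 * r ^ (-(2 : ℝ) * ε) - r ^ (-(2 : ℝ)))) =
      Real.pi * Real.sqrt (1 + ε) / (1 - ε) := by
  have ha : (0:ℝ) < 2 - 2*ε := by linarith
  have h1ε : (0:ℝ) < 1 + ε := by linarith
  set a : ℝ := 2 - 2*ε with haa
  set c : ℝ := Real.sqrt (1+ε) / (1-ε) with hc
  set f : ℝ → ℝ := fun r => c * Real.arctan (Real.sqrt ((r/rm) ^ a - 1)) with hf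
  -- value of β⁻¹^2
  have hβ2 : β⁻¹ ^ 2 = rm ^ (2*ε - 2) := by
    have h2 : rm ^ (-(2:ℝ)*ε) ≠ 0 := (Real.rpow_pos_of_pos hrm _).ne'
    have : β⁻¹ ^ 2 = rm ^ (-(2:ℝ)) / rm ^ (-(2:ℝ)*ε) := by
      rw [eq_div_iff h2]; exact hroot
    rw [this, ← Real.rpow_sub hrm]
    congr 1; ring
  -- pointwise simplification of the integrand on Ioi rm
  have hsimp : ∀ r ∈ Set.Ioi rm,
      Real.sqrt (1 + ε) /
          (r ^ 2 * Real.sqrt (β⁻¹ ^ 2 * r ^ (-(2 : ℝ) * ε) - r ^ (-(2 : ℝ)))) =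
        Real.sqrt (1+ε) / (r * Real.sqrt ((r/rm) ^ a - 1)) := by
    intro r hr
    have hr0 : (0:ℝ) < r := hrm.trans hr
    have hkey : β⁻¹ ^ 2 * r ^ (-(2:ℝ)*ε) - r ^ (-(2:ℝ)) = ((r/rm) ^ a - 1) * r ^ (-(2:ℝ)) := by
      have h1 : (r/rm) ^ a = r ^ a * rm ^ (2*ε - 2) := by
        rw [Real.div_rpow hr0.le hrm.le, div_eq_mul_inv, ← Real.rpow_neg hrm.le]
        congr 1; rw [haa]; ring
      have h2 : r ^ a * r ^ (-(2:ℝ)) = r ^ (-(2:ℝ)*ε) := by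
        rw [← Real.rpow_add hr0]
        congr 1; rw [haa]; ring
      rw [hβ2, h1]
      linear_combination (-(rm ^ (2*ε - 2))) * h2
    have hrn : r ^ (-(2:ℝ)) = (r^2)⁻¹ := by
      rw [Real.rpow_neg hr0.le, show ((2:ℝ)) = ((2:ℕ):ℝ) by norm_num, Real.rpow_natCast]
    rw [hkey, hrn, Real.sqrt_mul' _ (by positivity : (0:ℝ) ≤ (r^2)⁻¹), Real.sqrt_inv,
      Real.sqrt_sq hr0.le]
    congr 1
    field_simp
  -- continuity of f
  have hcontf : ∀ x, rm ≤ x → ContinuousAt f x := by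
    intro x hx
    have hx0 : (0:ℝ) < x := lt_of_lt_of_le hrm hx
    have h1 : ContinuousAt (fun y : ℝ => (y/rm) ^ a) x :=
      (Real.continuousAt_rpow_const _ _ (Or.inl (by positivity))).comp
        (continuousAt_id.div_const rm)
    exact continuousAt_const.mul
      (Real.continuous_arctan.continuousAt.comp
        (Real.continuous_sqrt.continuousAt.comp (h1.sub continuousAt_const)))
  -- derivative
  have hderiv : ∀ r ∈ Set.Ioi rm, HasDerivAt f
      (Real.sqrt (1 + ε) /
        (r ^ 2 * Real.sqrt (β⁻¹ ^ 2 * r ^ (-(2 : ℝ) * ε) - r ^ (-(2 : ℝ))))) r := by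
    intro r hr
    have hr0 : (0:ℝ) < r := hrm.trans hr
    have hrr : (1:ℝ) < r / rm := (one_lt_div hrm).2 hr
    have hp1 : (1:ℝ) < (r/rm) ^ a := by
      rw [Real.one_lt_rpow_iff_of_pos (by positivity)]
      exact Or.inl ⟨hrr, ha⟩
    have hq0 : (0:ℝ) < (r/rm) ^ a - 1 := by linarith
    have hp : HasDerivAt (fun y : ℝ => (y/rm) ^ a - 1) (a * (r/rm) ^ (a-1) * (1/rm)) r := by
      have := (Real.hasDerivAt_rpow_const (x := r/rm) (p := a)
        (Or.inl (by positivity))).comp r ((hasDerivAt_id r).div_const rm)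
      simpa using this.sub_const 1
    have hs := hp.sqrt hq0.ne'
    have harc := (Real.hasDerivAt_arctan (Real.sqrt ((r/rm) ^ a - 1))).comp r hs
    have hfin := harc.const_mul c
    refine hfin.congr_deriv ?_; symm
    have hsq : Real.sqrt ((r/rm) ^ a - 1) ^ 2 = (r/rm) ^ a - 1 := Real.sq_sqrt hq0.le
    have hpm : (r/rm) ^ (a - 1) = (r/rm) ^ a * (rm / r) := by
      rw [Real.rpow_sub (by positivity), Real.rpow_one, div_eq_mul_inv, inv_div]
    rw [hsimp r hr, hsq, hpm, hc, haa]
    have hsq0 : Real.sqrt ((r/rm) ^ a - 1) ≠ 0 := by positivity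
    have hp0 : (r/rm) ^ a ≠ 0 := by positivity
    have h1q : 1 + ((r/rm) ^ a - 1) ≠ 0 := by
      rw [add_sub_cancel]; exact hp0
    have h1me : (1:ℝ) - ε ≠ 0 := by linarith
    field_simp
    have hx : (r / rm) ^ (2 * (1 - ε)) ≠ 0 := by positivity
    rw [add_sub_cancel, mul_comm (Real.sqrt ((r / rm) ^ (2 * (1 - ε)) - 1)), ← div_div, div_self hx]
  -- nonnegativity
  have hnn : ∀ r ∈ Set.Ioi rm, 0 ≤
      Real.sqrt (1 + ε) /
        (r ^ 2 * Real.sqrt (β⁻¹ ^ 2 * r ^ (-(2 : ℝ) * ε) - r ^ (-(2 : ℝ)))) := by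
    intro r _
    positivity
  -- limit at infinity
  have htend : Filter.Tendsto f Filter.atTop (nhds (c * (Real.pi/2))) := by
    have h1 : Filter.Tendsto (fun r : ℝ => (r/rm) ^ a - 1) Filter.atTop Filter.atTop := by
      apply Filter.tendsto_atTop_add_const_right
      exact (tendsto_rpow_atTop ha).comp (Filter.tendsto_id.atTop_div_const hrm)
    have h2 : Filter.Tendsto Real.sqrt Filter.atTop Filter.atTop := by
      refine (tendsto_rpow_atTop (by norm_num : (0:ℝ) < 1/2)).congr fun x => ?_
      exact (Real.sqrt_eq_rpow x).symm
    have h3 := Real.tendsto_arctan_atTop.comp (h2.comp h1)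
    have h4 : Filter.Tendsto (fun r : ℝ => Real.arctan (Real.sqrt ((r/rm) ^ a - 1)))
        Filter.atTop (nhds (Real.pi/2)) := h3.mono_right nhdsWithin_le_nhds
    exact h4.const_mul c
  have hint := integral_Ioi_of_hasDerivAt_of_nonneg ((hcontf rm le_rfl).continuousWithinAt)
    hderiv hnn htend
  have hfrm : f rm = 0 := by
    rw [hf]
    simp [div_self hrm.ne']
  rw [hint, hfrm, hc]
  have h1 : (1:ℝ) - ε ≠ 0 := by linarith
  field_simp
  ring
end
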